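/- Let A ∈ ℝ^{m×n} with m ≥ n and spectral norm ‖A‖ = 1, and let s = rank(AᵀA − I_n). Then s ≤ n − 1 and there exist matrices U ∈ ℝ^{(m+s)×m} and V ∈ ℝ^{(m+s)×n}, each with orthonormal columns, such that A = Uᵀ V. -/

import Mathlib

open Matrix

/-- Euclidean norm of a vector in `ℝ^n`. -/
noncomputable def vnorm {n : ℕ} (v : Fin n → ℝ) : ℝ := Real.sqrt (v ⬝ᵥ v)

/-- Spectral norm of a real matrix: the largest value of `‖Av‖` over the unit ball. -/
noncomputable def specNorm {m n : ℕ} (A : Matrix (Fin m) (Fin n) ℝ) : ℝ :=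
  sSup {r : ℝ | ∃ v : Fin n → ℝ, vnorm v ≤ 1 ∧ r = vnorm (A.mulVec v)}

lemma vnorm_nonneg' {n : ℕ} (v : Fin n → ℝ) : 0 ≤ vnorm v := Real.sqrt_nonneg _

lemma dotProduct_self_nonneg' {n : ℕ} (v : Fin n → ℝ) : 0 ≤ v ⬝ᵥ v :=
  Finset.sum_nonneg fun _ _ => mul_self_nonneg _

lemma vnorm_eq_norm {n : ℕ} (v : Fin n → ℝ) :
    vnorm v = ‖(WithLp.equiv 2 (Fin n → ℝ)).symm v‖ := by
  rw [EuclideanSpace.norm_eq, vnorm]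
  congr 1
  simp [dotProduct, Real.norm_eq_abs, sq_abs, pow_two]

lemma vnorm_smul' {n : ℕ} (c : ℝ) (v : Fin n → ℝ) : vnorm (c • v) = |c| * vnorm v := by
  rw [vnorm_eq_norm, vnorm_eq_norm]
  rw [show (WithLp.equiv 2 (Fin n → ℝ)).symm (c • v) = c • (WithLp.equiv 2 (Fin n → ℝ)).symm v
    from rfl]
  rw [norm_smul, Real.norm_eq_abs]

lemma sq_vnorm {n : ℕ} (v : Fin n → ℝ) : vnorm v ^ 2 = v ⬝ᵥ v := by
  rw [vnorm, Real.sq_sqrt (dotProduct_self_nonneg' v)]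

lemma specNorm_facts {m n : ℕ} (A : Matrix (Fin m) (Fin n) ℝ) :
    (∀ v : Fin n → ℝ, vnorm v ≤ 1 → vnorm (A.mulVec v) ≤ specNorm A) ∧
    (∃ v : Fin n → ℝ, vnorm v ≤ 1 ∧ vnorm (A.mulVec v) = specNorm A) := by
  classical
  set g : EuclideanSpace ℝ (Fin n) → ℝ :=
    fun v => vnorm (A.mulVec (WithLp.equiv 2 (Fin n → ℝ) v)) with hg_def
  have hmv : Continuous fun w : Fin n → ℝ => A.mulVec w := by
    have := A.mulVecLin.continuous_of_finiteDimensional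
    exact this
  have hvn : Continuous fun w : Fin m → ℝ => vnorm w := by
    apply Real.continuous_sqrt.comp
    unfold dotProduct
    exact continuous_finset_sum _ fun i _ => ((continuous_apply i).mul (continuous_apply i))
  have hg : Continuous g := by
    apply (hvn.comp hmv).comp
    exact (PiLp.continuous_ofLp 2 (fun _ : Fin n => ℝ))
  have hK : IsCompact (Metric.closedBall (0 : EuclideanSpace ℝ (Fin n)) 1) :=
    isCompact_closedBall _ _
  have hSeq : {r : ℝ | ∃ v : Fin n → ℝ, vnorm v ≤ 1 ∧ r = vnorm (A.mulVec v)} =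
      g '' (Metric.closedBall (0 : EuclideanSpace ℝ (Fin n)) 1) := by
    ext r
    constructor
    · rintro ⟨v, hv, rfl⟩
      refine ⟨(WithLp.equiv 2 (Fin n → ℝ)).symm v, ?_, rfl⟩
      rw [Metric.mem_closedBall, dist_zero_right, ← vnorm_eq_norm]
      exact hv
    · rintro ⟨w, hw, rfl⟩
      refine ⟨WithLp.equiv 2 (Fin n → ℝ) w, ?_, rfl⟩
      rw [Metric.mem_closedBall, dist_zero_right] at hw
      rw [vnorm_eq_norm]
      simpa using hw
  have himg : IsCompact (g '' (Metric.closedBall (0 : EuclideanSpace ℝ (Fin n)) 1)) :=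
    hK.image hg
  have hne : (g '' (Metric.closedBall (0 : EuclideanSpace ℝ (Fin n)) 1)).Nonempty :=
    ⟨g 0, Set.mem_image_of_mem _ (by simp)⟩
  constructor
  · intro v hv
    apply le_csSup
    · rw [hSeq] at *
      exact himg.bddAbove
    · exact ⟨v, hv, rfl⟩
  · have := himg.sSup_mem hne
    rw [← hSeq] at this
    rw [specNorm]
    obtain ⟨v, hv, hv2⟩ := this
    exact ⟨v, hv, hv2.symm⟩

lemma rank_neg' {n : ℕ} (M : Matrix (Fin n) (Fin n) ℝ) : (-M).rank = M.rank := by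
  have h : (-M).mulVecLin = -(M.mulVecLin) := by
    ext x
    simp [neg_mulVec]
  rw [Matrix.rank, Matrix.rank, h, LinearMap.range_neg]

/-- Any matrix `A ∈ ℝ^{m×n}` with `m ≥ n` and spectral norm 1 can be decomposed as
`A = Uᵀ V` where `U ∈ ℝ^{(m+s)×m}` and `V ∈ ℝ^{(m+s)×n}` have orthonormal columns and
`s = rank (AᵀA - Iₙ) ≤ n - 1`. -/
theorem stmt0 {m n : ℕ} (hmn : n ≤ m) (A : Matrix (Fin m) (Fin n) ℝ)
    (hA : specNorm A = 1) (s : ℕ) (hs : s = (Aᵀ * A - 1).rank) :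
    s ≤ n - 1 ∧
      ∃ (U : Matrix (Fin (m + s)) (Fin m) ℝ) (V : Matrix (Fin (m + s)) (Fin n) ℝ),
        Uᵀ * U = 1 ∧ Vᵀ * V = 1 ∧ A = Uᵀ * V := by
  classical
  obtain ⟨key1, v₀, hv₀, hv₀1⟩ := specNorm_facts A
  rw [hA] at key1 hv₀1
  -- ‖Av‖ ≤ ‖v‖ for all v
  have key3 : ∀ v : Fin n → ℝ, vnorm (A.mulVec v) ≤ vnorm v := by
    intro v
    rcases eq_or_lt_of_le (vnorm_nonneg' v) with h0 | hpos
    · have hvv : v ⬝ᵥ v = 0 := by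
        have := sq_vnorm v
        rw [← h0] at this
        simpa using this.symm
      have hv0 : v = 0 := by
        rwa [dotProduct_self_eq_zero] at hvv
      simp [hv0, ← h0, vnorm, dotProduct]
    · set c := vnorm v with hc
      have h1 : vnorm (c⁻¹ • v) = 1 := by
        rw [vnorm_smul', abs_of_pos (inv_pos.mpr hpos), inv_mul_cancel₀ (ne_of_gt hpos)]
      have h2 := key1 (c⁻¹ • v) (le_of_eq h1)
      rw [mulVec_smul, vnorm_smul', abs_of_pos (inv_pos.mpr hpos)] at h2
      calc vnorm (A.mulVec v) = c * (c⁻¹ * vnorm (A.mulVec v)) := by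
            field_simp
        _ ≤ c * 1 := by
            exact mul_le_mul_of_nonneg_left h2 (le_of_lt hpos)
        _ = c := mul_one c
  -- quadratic form inequality
  have key4 : ∀ x : Fin n → ℝ, (A.mulVec x) ⬝ᵥ (A.mulVec x) ≤ x ⬝ᵥ x := by
    intro x
    have := key3 x
    have h := pow_le_pow_left₀ (vnorm_nonneg' _) this 2
    rwa [sq_vnorm, sq_vnorm] at h
  set M : Matrix (Fin n) (Fin n) ℝ := 1 - Aᵀ * A with hM_def
  have hdot : ∀ x : Fin n → ℝ, x ⬝ᵥ (M.mulVec x) = x ⬝ᵥ x - (A.mulVec x) ⬝ᵥ (A.mulVec x) := by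
    intro x
    rw [hM_def, sub_mulVec, dotProduct_sub, one_mulVec]
    congr 1
    rw [← mulVec_mulVec, dotProduct_mulVec, vecMul_transpose]
  have hAT : Aᵀ = Aᴴ := (Matrix.conjTranspose_eq_transpose_of_trivial A).symm
  have hHerm : M.IsHermitian := by
    rw [hM_def, hAT]
    exact Matrix.isHermitian_one.sub (isHermitian_conjTranspose_mul_self A)
  have hPSD : M.PosSemidef := by
    refine Matrix.PosSemidef.of_dotProduct_mulVec_nonneg hHerm fun x => ?_
    have : (star x : Fin n → ℝ) = x := by
      ext i; simp
    rw [this, hdot]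
    linarith [key4 x]
  -- the attained vector gives a kernel element
  have hv₀dot : (A.mulVec v₀) ⬝ᵥ (A.mulVec v₀) = 1 := by
    have := sq_vnorm (A.mulVec v₀)
    rw [hv₀1] at this
    simpa using this.symm
  have hv₀le : v₀ ⬝ᵥ v₀ ≤ 1 := by
    have h := pow_le_pow_left₀ (vnorm_nonneg' v₀) hv₀ 2
    rwa [sq_vnorm, one_pow] at h
  have hv₀ge : 1 ≤ v₀ ⬝ᵥ v₀ := by
    have := key4 v₀
    rw [hv₀dot] at this
    exact this
  have hv₀eq : v₀ ⬝ᵥ v₀ = 1 := le_antisymm hv₀le hv₀ge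
  have hker : M.mulVec v₀ = 0 := by
    have h0 : v₀ ⬝ᵥ (M.mulVec v₀) = 0 := by
      rw [hdot, hv₀dot, hv₀eq, sub_self]
    have hstar : (star v₀ : Fin n → ℝ) = v₀ := by ext i; simp
    rw [← hPSD.dotProduct_mulVec_zero_iff v₀, hstar]
    exact h0
  have hv₀ne : v₀ ≠ 0 := by
    intro h
    rw [h] at hv₀eq
    simp [dotProduct] at hv₀eq
  -- rank bound
  have hrankM : s = M.rank := by
    rw [hs, ← rank_neg' (Aᵀ * A - 1), neg_sub]
  have hrank_le : M.rank ≤ n - 1 := by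
    have hrn := LinearMap.finrank_range_add_finrank_ker M.mulVecLin
    have hkerpos : 0 < Module.finrank ℝ (LinearMap.ker M.mulVecLin) := by
      have hmem : v₀ ∈ LinearMap.ker M.mulVecLin := by
        simpa [Matrix.mulVecLin_apply] using hker
      rw [Module.finrank_pos_iff]
      exact ⟨⟨⟨v₀, hmem⟩, 0, by simp [hv₀ne, Subtype.ext_iff]⟩⟩
    have hfr : Module.finrank ℝ (Fin n → ℝ) = n := by simp
    rw [hfr] at hrn
    have : M.rank = Module.finrank ℝ (LinearMap.range M.mulVecLin) := rfl
    omega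
  refine ⟨by omega, ?_⟩
  -- construct B with Bᵀ * B = M
  have hcard : Fintype.card {i // hHerm.eigenvalues i ≠ 0} = s := by
    rw [hrankM, hHerm.rank_eq_card_non_zero_eigs]
  let σ : Fin s ≃ {i // hHerm.eigenvalues i ≠ 0} := (Fintype.equivFinOfCardEq hcard).symm
  set μ : Fin n → ℝ := hHerm.eigenvalues with hμ_def
  set Q : Matrix (Fin n) (Fin n) ℝ := (hHerm.eigenvectorUnitary : Matrix (Fin n) (Fin n) ℝ)
    with hQ_def
  set B : Matrix (Fin s) (Fin n) ℝ :=
    Matrix.of (fun k j => Real.sqrt (μ (σ k)) * Q j (σ k)) with hB_def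
  have hμnn : ∀ i, 0 ≤ μ i := fun i => hPSD.eigenvalues_nonneg i
  have hMentry : ∀ j l, M j l = ∑ i, μ i * (Q j i * Q l i) := by
    intro j l
    nth_rewrite 1 [hHerm.spectral_theorem]
    rw [Unitary.conjStarAlgAut_apply]
    rw [Matrix.mul_apply]
    apply Finset.sum_congr rfl
    intro i _
    rw [Matrix.mul_diagonal]
    simp only [Matrix.star_apply, star_trivial, Function.comp_apply, RCLike.ofReal_real_eq_id,
      id_eq]
    ring
  have hBB : Bᵀ * B = M := by
    ext j l
    rw [Matrix.mul_apply, hMentry j l]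
    have hterm : ∀ k : Fin s, Bᵀ j k * B k l = μ (σ k) * (Q j (σ k) * Q l (σ k)) := by
      intro k
      simp only [transpose_apply, hB_def, Matrix.of_apply]
      rw [show Real.sqrt (μ (σ k)) * Q j (σ k) * (Real.sqrt (μ (σ k)) * Q l (σ k))
          = (Real.sqrt (μ (σ k)) * Real.sqrt (μ (σ k))) * (Q j (σ k) * Q l (σ k)) by ring,
        Real.mul_self_sqrt (hμnn _)]
    calc ∑ k : Fin s, Bᵀ j k * B k l
        = ∑ i : {i // μ i ≠ 0}, μ i * (Q j i * Q l i) := by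
          rw [← Equiv.sum_comp σ (fun i : {i // μ i ≠ 0} => μ i.1 * (Q j i.1 * Q l i.1))]
          exact Finset.sum_congr rfl fun k _ => hterm k
      _ = ∑ i ∈ Finset.univ.filter (fun i => μ i ≠ 0), μ i * (Q j i * Q l i) :=
          (Finset.sum_subtype (Finset.univ.filter (fun i => μ i ≠ 0)) (fun x => by simp)
            (fun i => μ i * (Q j i * Q l i))).symm
      _ = ∑ i, μ i * (Q j i * Q l i) := by
          apply Finset.sum_filter_of_ne
          intro i _ hne hzero
          rw [hzero] at hne
          simp at hne
  -- assemble U and V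
  let e : Fin (m + s) ≃ (Fin m ⊕ Fin s) := finSumFinEquiv.symm
  refine ⟨(Matrix.fromRows (1 : Matrix (Fin m) (Fin m) ℝ)
      (0 : Matrix (Fin s) (Fin m) ℝ)).submatrix e id,
    (Matrix.fromRows A B).submatrix e id, ?_, ?_, ?_⟩
  · rw [transpose_submatrix, submatrix_mul_equiv, transpose_fromRows,
      fromCols_mul_fromRows]
    simp
  · rw [transpose_submatrix, submatrix_mul_equiv, transpose_fromRows,
      fromCols_mul_fromRows, submatrix_id_id, hBB, hM_def]
    abel
  · rw [transpose_submatrix, submatrix_mul_equiv, transpose_fromRows,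
      fromCols_mul_fromRows]
    simp
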